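/- arXiv:1403.7801 — 2 statements merged into one kernel-verified Lean document; each statement's English description precedes it below -/
import Mathlib

section
/- Let p be an odd prime, let ε ∈ 𝔽_p be a non-square, and let n be an integer not divisible by p. Then there exists a matrix A ∈ SL₂(ℤ) whose reduction modulo p equals B · diag(1, n⁻¹) for some invertible B ∈ C_ns^ε(p); and for every such matrix A one has A⁻¹ · Γ_ns^ε(p) · A = Γ_ns^{εn²}(p) (conjugation inside SL₂(ℤ)). -/
open Matrix

/-- The Cartan non-split ring mod `p`: the set of matrices `(a b; c d)` over `𝔽_p`
with `a = d` and `c = ε * b`. -/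
def CnsSet (p : ℕ) (ε : ZMod p) : Set (Matrix (Fin 2) (Fin 2) (ZMod p)) :=
  {A | A 0 0 = A 1 1 ∧ A 1 0 = ε * A 0 1}

lemma cns_one (p : ℕ) (ε : ZMod p) : (1 : Matrix (Fin 2) (Fin 2) (ZMod p)) ∈ CnsSet p ε := by
  simp [CnsSet, Matrix.one_apply]

lemma cns_mul {p : ℕ} {ε : ZMod p} {A B : Matrix (Fin 2) (Fin 2) (ZMod p)}
    (hA : A ∈ CnsSet p ε) (hB : B ∈ CnsSet p ε) : A * B ∈ CnsSet p ε := by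
  obtain ⟨hA1, hA2⟩ := hA
  obtain ⟨hB1, hB2⟩ := hB
  constructor <;>
    · simp only [Matrix.mul_apply, Fin.sum_univ_two, hA1, hA2, hB1, hB2]
      ring

lemma cns_adj {p : ℕ} {ε : ZMod p} {A : Matrix (Fin 2) (Fin 2) (ZMod p)}
    (hA : A ∈ CnsSet p ε) : A.adjugate ∈ CnsSet p ε := by
  obtain ⟨hA1, hA2⟩ := hA
  rw [Matrix.adjugate_fin_two]
  refine ⟨by simp [hA1], by simp [hA2]⟩

/-- Reduction modulo `p` on `SL₂`. -/
def redSL (p : ℕ) :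
    Matrix.SpecialLinearGroup (Fin 2) ℤ →* Matrix.SpecialLinearGroup (Fin 2) (ZMod p) :=
  Matrix.SpecialLinearGroup.map (Int.castRingHom (ZMod p))

/-- The determinant-one part of the Cartan non-split ring, as a subgroup of `SL₂(𝔽_p)`. -/
def CnsSL (p : ℕ) (ε : ZMod p) : Subgroup (Matrix.SpecialLinearGroup (Fin 2) (ZMod p)) where
  carrier := {A | (A : Matrix (Fin 2) (Fin 2) (ZMod p)) ∈ CnsSet p ε}
  one_mem' := by simpa using cns_one p ε
  mul_mem' := by
    intro A B hA hB
    simpa using cns_mul hA hB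
  inv_mem' := by
    intro A hA
    simp only [Set.mem_setOf_eq, Matrix.SpecialLinearGroup.coe_inv] at hA ⊢
    exact cns_adj hA

/-- The Cartan non-split group `Γ_ns^ε(p)`: the subgroup of `SL₂(ℤ)` of matrices whose
reduction modulo `p` lies in the Cartan non-split ring. -/
def GammaNs (p : ℕ) (ε : ZMod p) : Subgroup (Matrix.SpecialLinearGroup (Fin 2) ℤ) :=
  (CnsSL p ε).comap (redSL p)

lemma cns_iff_commute {p : ℕ} {ε : ZMod p} (M : Matrix (Fin 2) (Fin 2) (ZMod p)) :
    M ∈ CnsSet p ε ↔ M * !![0,1;ε,0] = !![0,1;ε,0] * M := by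
  constructor
  · rintro ⟨h1, h2⟩
    ext i j
    fin_cases i <;> fin_cases j <;>
      simp [Matrix.mul_apply, Fin.sum_univ_two, h1, h2] <;> ring
  · intro h
    have h1 := congrFun (congrFun h 0) 1
    have h2 := congrFun (congrFun h 1) 1
    simp [Matrix.mul_apply, Fin.sum_univ_two] at h1 h2
    exact ⟨h1, by rw [h2, mul_comm]⟩

lemma conj_iff {p : ℕ} [Fact p.Prime] {ε ν : ZMod p} (hν : ν ≠ 0)
    {B Xm Y Mm : Matrix (Fin 2) (Fin 2) (ZMod p)} (hB : B ∈ CnsSet p ε)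
    (hX : Xm = B * !![1,0;0,ν⁻¹]) (hYX : Y * Xm = 1) (hXY : Xm * Y = 1) :
    Xm * Mm * Y ∈ CnsSet p ε ↔ Mm ∈ CnsSet p (ε * ν ^ 2) := by
  set J : Matrix (Fin 2) (Fin 2) (ZMod p) := !![0,1;ε,0] with hJ
  set J' : Matrix (Fin 2) (Fin 2) (ZMod p) := !![0,1;ε*ν^2,0] with hJ'
  have hBJ : B * J = J * B := (cns_iff_commute B).mp hB
  have hDJ : J * !![1,0;0,ν⁻¹] = ν⁻¹ • (!![(1:ZMod p),0;0,ν⁻¹] * J') := by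
    rw [hJ, hJ']
    ext i j
    fin_cases i <;> fin_cases j <;>
        simp only [Matrix.mul_apply, Fin.sum_univ_two, Matrix.smul_apply, Matrix.cons_val',
          Matrix.cons_val_zero, Matrix.cons_val_one, Matrix.head_cons, Matrix.head_fin_const,
          Matrix.empty_val', Matrix.cons_val_fin_one, smul_eq_mul, Matrix.of_apply, Fin.zero_eta,
          Fin.mk_one, Fin.isValue] <;>
      · field_simp
        try ring
        try tauto
  have hJX : J * Xm = ν⁻¹ • (Xm * J') := by
    rw [hX, ← mul_assoc, ← hBJ, mul_assoc, hDJ, Matrix.mul_smul, mul_assoc]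
  have hC : Y * (J * Xm) = ν⁻¹ • J' := by
    rw [hJX, Matrix.mul_smul, ← mul_assoc, hYX, one_mul]
  have e2 : ∀ t : Matrix (Fin 2) (Fin 2) (ZMod p), Xm * (Y * t) = t := by
    intro t; rw [← mul_assoc, hXY, one_mul]
  have cancelL : ∀ s t : Matrix (Fin 2) (Fin 2) (ZMod p), Xm * s = Xm * t → s = t := by
    intro s t h
    have h2 := congrArg (Y * ·) h
    rwa [← mul_assoc, ← mul_assoc, hYX, one_mul, one_mul] at h2
  have cancelR : ∀ s t : Matrix (Fin 2) (Fin 2) (ZMod p), s * Xm = t * Xm → s = t := by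
    intro s t h
    have h2 := congrArg (· * Y) h
    rwa [mul_assoc, mul_assoc, hXY, mul_one, mul_one] at h2
  rw [cns_iff_commute, cns_iff_commute, ← hJ, ← hJ']
  have smul_iff : Mm * (ν⁻¹ • J') = (ν⁻¹ • J') * Mm ↔ Mm * J' = J' * Mm := by
    rw [Matrix.mul_smul, Matrix.smul_mul]
    constructor
    · exact fun h => smul_right_injective _ (inv_ne_zero hν) h
    · exact fun h => by rw [h]
  constructor
  · intro H
    have H2 : Xm * (Mm * (Y * (J * Xm))) = J * (Xm * Mm) := by
      have h2 := congrArg (· * Xm) H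
      simp only [mul_assoc] at h2
      rwa [hYX, mul_one] at h2
    have key2 : Mm * (Y * (J * Xm)) = (Y * (J * Xm)) * Mm := by
      refine cancelL _ _ ?_
      rw [H2]
      simp only [← mul_assoc]
      simp only [mul_assoc]
      rw [e2]
    rw [hC] at key2
    exact smul_iff.mp key2
  · intro H
    have key2 : Mm * (Y * (J * Xm)) = (Y * (J * Xm)) * Mm := by
      rw [hC]; exact smul_iff.mpr H
    refine cancelR _ _ ?_
    simp only [mul_assoc]
    rw [hYX, mul_one, key2]
    simp only [mul_assoc]
    rw [e2]

lemma exists_coprime_lift_aux (p : ℕ) [Fact p.Prime] (w y : ZMod p) (hw : w ≠ 0) :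
    ∃ w₀ y₀ : ℤ, ((w₀ : ZMod p) = w) ∧ ((y₀ : ZMod p) = y) ∧ IsCoprime w₀ y₀ := by
  have hp : p.Prime := Fact.out
  have hvpos : 0 < w.val := Nat.pos_of_ne_zero (fun h => hw ((ZMod.val_eq_zero w).mp h))
  have hvlt : w.val < p := ZMod.val_lt w
  have hnat : Nat.Coprime w.val p :=
    Nat.Coprime.symm ((Nat.Prime.coprime_iff_not_dvd hp).mpr
      (Nat.not_dvd_of_pos_of_lt hvpos hvlt))
  have hco : IsCoprime (w.val : ℤ) (p : ℤ) := Int.isCoprime_iff_gcd_eq_one.mpr (by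
    rw [Int.gcd_natCast_natCast]; exact hnat)
  obtain ⟨a, b, hab⟩ := hco
  refine ⟨(w.val : ℤ), (y.val : ℤ) * (a * (w.val : ℤ)) + b * p, ?_, ?_, ?_⟩
  · simp [ZMod.natCast_val, ZMod.cast_id]
  · have hab' : (a : ZMod p) * ((w.val : ℤ) : ZMod p) = 1 := by
      have := congrArg (fun z : ℤ => (z : ZMod p)) hab
      push_cast at this
      simpa [ZMod.natCast_self] using this
    push_cast
    rw [show ((a : ZMod p) * (w.val : ZMod p)) = 1 from by push_cast at hab'; exact_mod_cast hab']
    simp [ZMod.natCast_val, ZMod.cast_id]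
  · refine ⟨-(a * ((y.val : ℤ) - 1)), 1, by linear_combination hab⟩

lemma exists_coprime_lift (p : ℕ) [Fact p.Prime] (w y : ZMod p) (hwy : ¬(w = 0 ∧ y = 0)) :
    ∃ w₀ y₀ : ℤ, ((w₀ : ZMod p) = w) ∧ ((y₀ : ZMod p) = y) ∧ IsCoprime w₀ y₀ := by
  by_cases hw : w = 0
  · have hy : y ≠ 0 := fun h => hwy ⟨hw, h⟩
    obtain ⟨y₀, w₀, h1, h2, h3⟩ := exists_coprime_lift_aux p y w hy
    exact ⟨w₀, y₀, h2, h1, h3.symm⟩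
  · exact exists_coprime_lift_aux p w y hw


lemma mem_gammaNs_iff {p : ℕ} {ε : ZMod p} (g : Matrix.SpecialLinearGroup (Fin 2) ℤ) :
    g ∈ GammaNs p ε ↔ (redSL p g : Matrix (Fin 2) (Fin 2) (ZMod p)) ∈ CnsSet p ε :=
  Iff.rfl


/-- There is a matrix `A ∈ SL₂(ℤ)` whose reduction mod `p` is `B · diag(1, n⁻¹)` with
`B` an invertible element of the Cartan non-split ring, and any such `A` conjugates
`Γ_ns^ε(p)` onto `Γ_ns^{εn²}(p)`. -/
theorem exists_conjugating_matrix (p : ℕ) [Fact p.Prime] (hp : Odd p)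
    (ε : ZMod p) (hε : ¬ IsSquare ε) (n : ℤ) (hn : ¬ (p : ℤ) ∣ n) :
    (∃ A : Matrix.SpecialLinearGroup (Fin 2) ℤ, ∃ B ∈ CnsSet p ε, IsUnit B ∧
        (redSL p A : Matrix (Fin 2) (Fin 2) (ZMod p))
          = B * !![1, 0; 0, ((n : ZMod p))⁻¹]) ∧
    ∀ A : Matrix.SpecialLinearGroup (Fin 2) ℤ,
      (∃ B ∈ CnsSet p ε, IsUnit B ∧
        (redSL p A : Matrix (Fin 2) (Fin 2) (ZMod p))
          = B * !![1, 0; 0, ((n : ZMod p))⁻¹]) →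
      (fun g => A⁻¹ * g * A) '' (GammaNs p ε : Set (Matrix.SpecialLinearGroup (Fin 2) ℤ))
        = (GammaNs p (ε * (n : ZMod p) ^ 2)
            : Set (Matrix.SpecialLinearGroup (Fin 2) ℤ)) := by
  have hp' : p.Prime := Fact.out
  have hν : (n : ZMod p) ≠ 0 := by
    rw [Ne, ZMod.intCast_zmod_eq_zero_iff_dvd]; exact hn
  have hε0 : ε ≠ 0 := fun h => hε ⟨0, by simp [h]⟩
  constructor
  · -- existence
    obtain ⟨w, y, hwy⟩ : ∃ w y : ZMod p, w ^ 2 - ε * y ^ 2 = ((n : ZMod p))⁻¹ := by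
      obtain ⟨a, b, hab⟩ := FiniteField.exists_root_sum_quadratic
        (f := (Polynomial.X ^ 2 : Polynomial (ZMod p)))
        (g := Polynomial.C (-ε) * Polynomial.X ^ 2 + Polynomial.C 0 * Polynomial.X
          + Polynomial.C (-((n : ZMod p))⁻¹))
        (by simpa using Polynomial.degree_X_pow 2)
        (Polynomial.degree_quadratic (neg_ne_zero.mpr hε0))
        (by rw [ZMod.card]; exact Nat.odd_iff.mp hp)
      refine ⟨a, b, ?_⟩
      simp only [Polynomial.eval_add, Polynomial.eval_mul, Polynomial.eval_pow,
        Polynomial.eval_X, Polynomial.eval_C, Polynomial.map_zero, zero_mul] at hab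
      linear_combination hab
    have hnb : ¬(w = 0 ∧ y = 0) := by
      rintro ⟨rfl, rfl⟩
      apply inv_ne_zero hν
      rw [← hwy]; ring
    obtain ⟨w₀, y₀, hw₀, hy₀, hcop⟩ := exists_coprime_lift p w y hnb
    have heε : (((ε.val : ℤ) : ZMod p)) = ε := by
      push_cast
      simp [ZMod.natCast_val, ZMod.cast_id]
    set e : ℤ := (ε.val : ℤ) with he
    have hdvd : (p : ℤ) ∣ (1 - n * (w₀ ^ 2 - e * y₀ ^ 2)) := by
      rw [← ZMod.intCast_zmod_eq_zero_iff_dvd]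
      push_cast
      rw [show ((e : ZMod p)) = ε from heε, hw₀, hy₀]
      have hmul : (n : ZMod p) * (w ^ 2 - ε * y ^ 2) = 1 := by
        rw [hwy]; exact mul_inv_cancel₀ hν
      linear_combination -hmul
    obtain ⟨k, hk⟩ := hdvd
    obtain ⟨u, v, huv⟩ := hcop
    have hdet : Matrix.det !![n * w₀ + p * (k * u), y₀;
        e * n * y₀ + p * (-(k * v)), w₀] = 1 := by
      rw [Matrix.det_fin_two_of]
      linear_combination (p : ℤ) * k * huv - hk
    set A : Matrix.SpecialLinearGroup (Fin 2) ℤ :=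
      ⟨!![n * w₀ + p * (k * u), y₀; e * n * y₀ + p * (-(k * v)), w₀], hdet⟩ with hA
    have hmat : (redSL p A : Matrix (Fin 2) (Fin 2) (ZMod p))
        = !![((n * w₀ + p * (k * u) : ℤ) : ZMod p), ((y₀ : ℤ) : ZMod p);
            ((e * n * y₀ + p * (-(k * v)) : ℤ) : ZMod p), ((w₀ : ℤ) : ZMod p)] := by
      ext i j
      fin_cases i <;> fin_cases j <;> rfl
    refine ⟨A, (redSL p A : Matrix (Fin 2) (Fin 2) (ZMod p)) * !![1, 0; 0, (n : ZMod p)],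
      ?_, ?_, ?_⟩
    · -- membership in CnsSet
      rw [hmat, Matrix.mul_fin_two]
      constructor <;>
      · simp only [Matrix.cons_val', Matrix.cons_val_zero, Matrix.cons_val_one,
          Matrix.head_cons, Matrix.head_fin_const, Matrix.empty_val',
          Matrix.cons_val_fin_one, Matrix.cons_val_one, Matrix.of_apply]
        push_cast [ZMod.natCast_self]
        rw [show ((e : ZMod p)) = ε from heε]
        ring
    · -- IsUnit
      rw [Matrix.isUnit_iff_isUnit_det, Matrix.det_mul,
        (redSL p A).prop, one_mul, Matrix.det_fin_two_of]
      simpa using hν.isUnit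
    · -- red A = B * diag(1, n⁻¹)
      have hDD : (!![1, 0; 0, (n : ZMod p)] : Matrix (Fin 2) (Fin 2) (ZMod p))
          * !![1, 0; 0, ((n : ZMod p))⁻¹] = 1 := by
        rw [Matrix.mul_fin_two, Matrix.one_fin_two]
        congr 1 <;> simp [mul_inv_cancel₀ hν]
      rw [mul_assoc, hDD, mul_one]
  · -- conjugation
    rintro A ⟨B, hB, -, hX⟩
    set X : Matrix.SpecialLinearGroup (Fin 2) (ZMod p) := redSL p A with hXdef
    have hYX : ((X⁻¹ : Matrix.SpecialLinearGroup (Fin 2) (ZMod p))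
          : Matrix (Fin 2) (Fin 2) (ZMod p))
        * (X : Matrix (Fin 2) (Fin 2) (ZMod p)) = 1 := by
      rw [← Matrix.SpecialLinearGroup.coe_mul, inv_mul_cancel,
        Matrix.SpecialLinearGroup.coe_one]
    have hXY : (X : Matrix (Fin 2) (Fin 2) (ZMod p))
        * ((X⁻¹ : Matrix.SpecialLinearGroup (Fin 2) (ZMod p))
          : Matrix (Fin 2) (Fin 2) (ZMod p)) = 1 := by
      rw [← Matrix.SpecialLinearGroup.coe_mul, mul_inv_cancel,
        Matrix.SpecialLinearGroup.coe_one]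
    have key : ∀ g : Matrix.SpecialLinearGroup (Fin 2) ℤ,
        A⁻¹ * g * A ∈ GammaNs p (ε * (n : ZMod p) ^ 2) ↔ g ∈ GammaNs p ε := by
      intro g
      rw [mem_gammaNs_iff, mem_gammaNs_iff]
      have hcoe : (redSL p (A⁻¹ * g * A) : Matrix (Fin 2) (Fin 2) (ZMod p))
          = ((X⁻¹ : Matrix.SpecialLinearGroup (Fin 2) (ZMod p))
              : Matrix (Fin 2) (Fin 2) (ZMod p))
            * (redSL p g : Matrix (Fin 2) (Fin 2) (ZMod p))
            * (X : Matrix (Fin 2) (Fin 2) (ZMod p)) := by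
        rw [_root_.map_mul, _root_.map_mul, map_inv, Matrix.SpecialLinearGroup.coe_mul,
          Matrix.SpecialLinearGroup.coe_mul, hXdef]
      rw [hcoe]
      have hiff := conj_iff (Mm := ((X⁻¹ : Matrix.SpecialLinearGroup (Fin 2) (ZMod p))
              : Matrix (Fin 2) (Fin 2) (ZMod p))
            * (redSL p g : Matrix (Fin 2) (Fin 2) (ZMod p))
            * (X : Matrix (Fin 2) (Fin 2) (ZMod p)))
          hν hB (by rw [hXdef] at hX ⊢; exact hX) hYX hXY
      rw [← hiff]
      have hsimp : (X : Matrix (Fin 2) (Fin 2) (ZMod p))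
          * (((X⁻¹ : Matrix.SpecialLinearGroup (Fin 2) (ZMod p))
              : Matrix (Fin 2) (Fin 2) (ZMod p))
            * (redSL p g : Matrix (Fin 2) (Fin 2) (ZMod p))
            * (X : Matrix (Fin 2) (Fin 2) (ZMod p)))
          * ((X⁻¹ : Matrix.SpecialLinearGroup (Fin 2) (ZMod p))
              : Matrix (Fin 2) (Fin 2) (ZMod p))
          = (redSL p g : Matrix (Fin 2) (Fin 2) (ZMod p)) := by
        rw [← mul_assoc, ← mul_assoc, hXY, one_mul, mul_assoc, hXY, mul_one]
      rw [hsimp]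
    ext h
    simp only [Set.mem_image, SetLike.mem_coe]
    constructor
    · rintro ⟨g, hg, rfl⟩
      exact (key g).mpr hg
    · intro hh
      refine ⟨A * h * A⁻¹, ?_, by group⟩
      exact (key (A * h * A⁻¹)).mp
        (by rw [show A⁻¹ * (A * h * A⁻¹) * A = h from by group]; exact hh)
end

section
/- Let p be an odd prime and let ε ∈ 𝔽_p be a non-square. Then the reduction-modulo-p map from the Cartan non-split group Γ_ns^ε(p) to the group {M ∈ C_ns^ε(p) : det M = 1} is a surjective group homomorphism whose kernel is the principal congruence subgroup Γ(p). -/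
open Matrix

/-- The reduction map from `Γ_ns^ε(p)` to the determinant-one part of the Cartan
non-split ring, as a group homomorphism. -/
def redNs (p : ℕ) (ε : ZMod p) : GammaNs p ε →* CnsSL p ε :=
  MonoidHom.codRestrict ((redSL p).domRestrict (GammaNs p ε)) (CnsSL p ε) (fun x => x.2)


section Aux

private def Tz (n : ℤ) : Matrix.SpecialLinearGroup (Fin 2) ℤ :=
  ⟨!![1, n; 0, 1], by simp [Matrix.det_fin_two_of]⟩

private def Lz (n : ℤ) : Matrix.SpecialLinearGroup (Fin 2) ℤ :=
  ⟨!![1, 0; n, 1], by simp [Matrix.det_fin_two_of]⟩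

private lemma redSL_coe (p : ℕ) (A : Matrix.SpecialLinearGroup (Fin 2) ℤ) (i j : Fin 2) :
    (redSL p A : Matrix (Fin 2) (Fin 2) (ZMod p)) i j = ((A i j : ℤ) : ZMod p) := by
  simp [redSL, Matrix.SpecialLinearGroup.map_apply_coe]

set_option linter.unnecessarySeqFocus false in
private lemma lift_of_ne_zero (p : ℕ) [Fact p.Prime]
    (B : Matrix.SpecialLinearGroup (Fin 2) (ZMod p)) (hc : B 1 0 ≠ 0) :
    ∃ A, redSL p A = B := by
  set a := B 0 0; set b := B 0 1; set c := B 1 0; set d := B 1 1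
  have hdet : a * d - b * c = 1 := by
    have := B.2; rw [Matrix.det_fin_two] at this; exact this
  refine ⟨Tz (((a - 1) * c⁻¹).val : ℤ) * Lz (c.val : ℤ) * Tz (((d - 1) * c⁻¹).val : ℤ), ?_⟩
  ext i j
  simp only [_root_.map_mul]
  have hcast : ∀ x : ZMod p, (((x.val : ℤ) : ZMod p)) = x := by
    intro x; push_cast; simp [ZMod.natCast_val, ZMod.cast_id]
  fin_cases i <;> fin_cases j <;>
    simp only [Matrix.SpecialLinearGroup.coe_mul, Matrix.mul_apply, Fin.sum_univ_two,
        redSL_coe] <;> simp only [Tz, Lz] <;>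
    simp [hcast] <;> (try field_simp) <;> first | ring1 | linear_combination hdet

private lemma redSL_surjective (p : ℕ) [Fact p.Prime] : Function.Surjective (redSL p) := by
  intro B
  by_cases hc : B 1 0 ≠ 0
  · exact lift_of_ne_zero p B hc
  · push_neg at hc
    have hdet : B 0 0 * B 1 1 - B 0 1 * B 1 0 = 1 := by
      have := B.2; rw [Matrix.det_fin_two] at this; exact this
    have hd : B 1 1 ≠ 0 := by
      intro h; rw [hc, h] at hdet; simp at hdet
    have h' : (B * redSL p (Lz 1)) 1 0 ≠ 0 := by
      have : (B * redSL p (Lz 1)) 1 0 = B 1 0 * 1 + B 1 1 * 1 := by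
        simp [Matrix.SpecialLinearGroup.coe_mul, Matrix.mul_apply, Fin.sum_univ_two,
          redSL_coe]; simp [Lz]
      rw [this, hc]; simpa using hd
    obtain ⟨A, hA⟩ := lift_of_ne_zero p _ h'
    exact ⟨A * (Lz 1)⁻¹, by rw [_root_.map_mul, map_inv, hA, mul_inv_eq_iff_eq_mul]⟩

end Aux

/-- The reduction map `Γ_ns^ε(p) → {M ∈ C_ns^ε(p) : det M = 1}` is a surjective group
homomorphism with kernel the principal congruence subgroup `Γ(p)`. -/
theorem reduction_surjective_ker_gamma (p : ℕ) [Fact p.Prime] (hp : Odd p)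
    (ε : ZMod p) (hε : ¬ IsSquare ε) :
    (∀ A : GammaNs p ε, ((redNs p ε A : Matrix.SpecialLinearGroup (Fin 2) (ZMod p)))
        = redSL p (A : Matrix.SpecialLinearGroup (Fin 2) ℤ)) ∧
    Function.Surjective (redNs p ε) ∧
    (redNs p ε).ker = (CongruenceSubgroup.Gamma p).subgroupOf (GammaNs p ε) := by
  refine ⟨fun A => rfl, ?_, ?_⟩
  · rintro ⟨B, hB⟩
    obtain ⟨A, hA⟩ := redSL_surjective p B
    have hAmem : A ∈ GammaNs p ε := by
      show redSL p A ∈ CnsSL p ε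
      rw [hA]; exact hB
    exact ⟨⟨A, hAmem⟩, Subtype.ext hA⟩
  · ext x
    simp only [MonoidHom.mem_ker, Subgroup.mem_subgroupOf, CongruenceSubgroup.Gamma_mem',
      Subtype.ext_iff]
    exact Iff.rfl
end
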